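/- arXiv:2304.02473 — 6 statements merged into one kernel-verified Lean document; each statement's English description precedes it below -/
import Mathlib

section
/- Let f₁, f₀ : (0,∞) → ℝ be differentiable functions such that f₀'(r) = -r·f₁'(r) for all r > 0, and suppose the function G(μ) = μ·f₁(μ/(1-μ)) + (1-μ)·f₀(μ/(1-μ)) is convex and differentiable on (0,1). Then for all μ, ν ∈ (0,1): μ·f₁(ν/(1-ν)) + (1-μ)·f₀(ν/(1-ν)) ≤ μ·f₁(μ/(1-μ)) + (1-μ)·f₀(μ/(1-μ)). That is, the score S defined by S(1,ν) = f₁(ν/(1-ν)) and S(0,1-ν) = f₀(ν/(1-ν)) is a proper scoring rule for Bernoulli distributions. -/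
lemma fvnce_hasDerivG (f1 f0 : ℝ → ℝ)
    (hf1 : ∀ r > (0 : ℝ), DifferentiableAt ℝ f1 r)
    (hf0 : ∀ r > (0 : ℝ), DifferentiableAt ℝ f0 r)
    (hcompat : ∀ r > (0 : ℝ), deriv f0 r = -r * deriv f1 r)
    {ν : ℝ} (hν : ν ∈ Set.Ioo (0 : ℝ) 1) :
    HasDerivAt (fun μ => μ * f1 (μ / (1 - μ)) + (1 - μ) * f0 (μ / (1 - μ)))
      (f1 (ν / (1 - ν)) - f0 (ν / (1 - ν))) ν := by
  obtain ⟨h0, h1⟩ := hν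
  have hne : (1 : ℝ) - ν ≠ 0 := by linarith
  have hrpos : ν / (1 - ν) > 0 := div_pos h0 (by linarith)
  set r := ν / (1 - ν) with hr
  -- derivative of ν ↦ ν/(1-ν)
  have hden : HasDerivAt (fun x : ℝ => 1 - x) (-1) ν := by
    simpa using (hasDerivAt_id ν).const_sub 1
  have hratio : HasDerivAt (fun x : ℝ => x / (1 - x)) (1 / (1 - ν) ^ 2) ν := by
    have := (hasDerivAt_id ν).div hden hne
    rw [show (1:ℝ) / (1 - ν) ^ 2 = (1 * (1 - ν) - id ν * -1) / (1 - ν) ^ 2 by simp only [id_eq]; ring]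
    exact this
  have hc1 : HasDerivAt (fun x : ℝ => f1 (x / (1 - x)))
      (deriv f1 r * (1 / (1 - ν) ^ 2)) ν :=
    ((hf1 r hrpos).hasDerivAt.comp ν hratio)
  have hc0 : HasDerivAt (fun x : ℝ => f0 (x / (1 - x)))
      (deriv f0 r * (1 / (1 - ν) ^ 2)) ν :=
    ((hf0 r hrpos).hasDerivAt.comp ν hratio)
  have hG : HasDerivAt (fun μ => μ * f1 (μ / (1 - μ)) + (1 - μ) * f0 (μ / (1 - μ)))
      (1 * f1 r + ν * (deriv f1 r * (1 / (1 - ν) ^ 2)) +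
        ((-1) * f0 r + (1 - ν) * (deriv f0 r * (1 / (1 - ν) ^ 2)))) ν :=
    ((hasDerivAt_id ν).mul hc1).add (hden.mul hc0)
  convert hG using 1
  rw [hcompat r hrpos]
  have hrr : (1 - ν) * r = ν := by rw [hr]; field_simp
  linear_combination (deriv f1 r / (1 - ν) ^ 2) * hrr

/-- If `f₁, f₀` are differentiable on `(0,∞)` with `f₀'(r) = -r·f₁'(r)`, and
`G(μ) = μ·f₁(μ/(1-μ)) + (1-μ)·f₀(μ/(1-μ))` is convex and differentiable on `(0,1)`, then the
induced score `S(1,ν) = f₁(ν/(1-ν))`, `S(0,1-ν) = f₀(ν/(1-ν))` is a proper scoring rule: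
the expected score under the true parameter `μ` is maximized by predicting `ν = μ`. -/
theorem fvnce_stmt1 (f1 f0 : ℝ → ℝ)
    (hf1 : ∀ r > (0 : ℝ), DifferentiableAt ℝ f1 r)
    (hf0 : ∀ r > (0 : ℝ), DifferentiableAt ℝ f0 r)
    (hcompat : ∀ r > (0 : ℝ), deriv f0 r = -r * deriv f1 r)
    (hGconv : ConvexOn ℝ (Set.Ioo (0 : ℝ) 1)
      (fun μ => μ * f1 (μ / (1 - μ)) + (1 - μ) * f0 (μ / (1 - μ))))
    (hGdiff : ∀ μ ∈ Set.Ioo (0 : ℝ) 1, DifferentiableAt ℝ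
      (fun μ => μ * f1 (μ / (1 - μ)) + (1 - μ) * f0 (μ / (1 - μ))) μ) :
    ∀ μ ∈ Set.Ioo (0 : ℝ) 1, ∀ ν ∈ Set.Ioo (0 : ℝ) 1,
      μ * f1 (ν / (1 - ν)) + (1 - μ) * f0 (ν / (1 - ν)) ≤
        μ * f1 (μ / (1 - μ)) + (1 - μ) * f0 (μ / (1 - μ)) := by
  intro μ hμ ν hν
  set G := fun μ => μ * f1 (μ / (1 - μ)) + (1 - μ) * f0 (μ / (1 - μ)) with hGdef
  have hderiv := fvnce_hasDerivG f1 f0 hf1 hf0 hcompat hν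
  set d := f1 (ν / (1 - ν)) - f0 (ν / (1 - ν)) with hd
  -- expected score rewrites as G ν + (μ - ν) * d
  have key : μ * f1 (ν / (1 - ν)) + (1 - μ) * f0 (ν / (1 - ν)) = G ν + (μ - ν) * d := by
    simp only [hGdef, hd]; ring
  rw [key]
  show G ν + (μ - ν) * d ≤ G μ
  rcases lt_trichotomy ν μ with h | h | h
  · have := hGconv.le_slope_of_hasDerivAt hν hμ h hderiv
    rw [slope_def_field] at this
    have hpos : (0:ℝ) < μ - ν := by linarith
    rw [le_div_iff₀ hpos] at this
    linarith
  · simp [h]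
  · have := hGconv.slope_le_of_hasDerivAt hμ hν h hderiv
    rw [slope_def_field] at this
    have hpos : (0:ℝ) < ν - μ := by linarith
    rw [div_le_iff₀ hpos] at this
    linarith
end

section
/- Let f₁, f₀ : (0,∞) → ℝ be differentiable with f₀'(r) = -r·f₁'(r) for all r > 0, and define G(μ) = μ·f₁(μ/(1-μ)) + (1-μ)·f₀(μ/(1-μ)) for μ ∈ (0,1). Then G is differentiable on (0,1) with G'(μ) = f₁(μ/(1-μ)) - f₀(μ/(1-μ)) for all μ ∈ (0,1). -/
/-- If `f₁, f₀` are differentiable on `(0,∞)` with `f₀'(r) = -r·f₁'(r)`, then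
`G(μ) = μ·f₁(μ/(1-μ)) + (1-μ)·f₀(μ/(1-μ))` is differentiable on `(0,1)` with
`G'(μ) = f₁(μ/(1-μ)) - f₀(μ/(1-μ))`. -/
theorem fvnce_stmt2 (f1 f0 : ℝ → ℝ)
    (hf1 : ∀ r > (0 : ℝ), DifferentiableAt ℝ f1 r)
    (hf0 : ∀ r > (0 : ℝ), DifferentiableAt ℝ f0 r)
    (hcompat : ∀ r > (0 : ℝ), deriv f0 r = -r * deriv f1 r) :
    ∀ μ ∈ Set.Ioo (0 : ℝ) 1,
      HasDerivAt (fun μ : ℝ => μ * f1 (μ / (1 - μ)) + (1 - μ) * f0 (μ / (1 - μ)))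
        (f1 (μ / (1 - μ)) - f0 (μ / (1 - μ))) μ := by
  intro μ hμ
  obtain ⟨hμ0, hμ1⟩ := hμ
  have h1μ : (0:ℝ) < 1 - μ := by linarith
  set r := μ / (1 - μ) with hr_def
  have hr0 : 0 < r := div_pos hμ0 h1μ
  -- derivative of μ ↦ μ/(1-μ)
  have hratio : HasDerivAt (fun x : ℝ => x / (1 - x)) (1 / (1 - μ) ^ 2) μ := by
    have h := (hasDerivAt_id μ).div ((hasDerivAt_id μ).const_sub 1) (ne_of_gt h1μ)
    refine h.congr_deriv ?_
    simp only [id]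
    field_simp
    ring
  have h1 : HasDerivAt (fun x : ℝ => f1 (x / (1 - x)))
      (deriv f1 r * (1 / (1 - μ) ^ 2)) μ :=
    ((hf1 r hr0).hasDerivAt).comp μ hratio
  have h0 : HasDerivAt (fun x : ℝ => f0 (x / (1 - x)))
      (deriv f0 r * (1 / (1 - μ) ^ 2)) μ :=
    ((hf0 r hr0).hasDerivAt).comp μ hratio
  have hA : HasDerivAt (fun x : ℝ => x * f1 (x / (1 - x)))
      (1 * f1 r + μ * (deriv f1 r * (1 / (1 - μ) ^ 2))) μ :=
    (hasDerivAt_id μ).mul h1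
  have hB : HasDerivAt (fun x : ℝ => (1 - x) * f0 (x / (1 - x)))
      ((-1) * f0 r + (1 - μ) * (deriv f0 r * (1 / (1 - μ) ^ 2))) μ :=
    ((hasDerivAt_id μ).const_sub 1).mul h0
  have h := hA.add hB
  refine h.congr_deriv ?_
  rw [hcompat r hr0, hr_def]
  field_simp
  ring
end

section
/- For every β ≥ 0, let f₁(r) = log(r+β) and f₀(r) = β·log(r+β) - r, and let G(μ) = μ·f₁(μ/(1-μ)) + (1-μ)·f₀(μ/(1-μ)) for μ ∈ (0,1). Then G is twice differentiable on (0,1) with G''(μ) = 1 / ((1-μ)²·(μ + β(1-μ))) > 0 for all μ ∈ (0,1); in particular G is strictly convex on (0,1), so the pair (f₁, f₀) has the double ELBO property. -/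
open Set Filter



/-- A pair `(f₁, f₀)` of differentiable functions on `(0,∞)` has the *double ELBO property* if
both are concave on `(0,∞)`, they satisfy the compatibility condition `f₀'(r) = -r·f₁'(r)` for
all `r > 0`, and `G(μ) = μ·f₁(μ/(1-μ)) + (1-μ)·f₀(μ/(1-μ))` is convex on `(0,1)`. -/
def DoubleELBO (f1 f0 : ℝ → ℝ) : Prop :=
  (∀ r > (0 : ℝ), DifferentiableAt ℝ f1 r) ∧
  (∀ r > (0 : ℝ), DifferentiableAt ℝ f0 r) ∧
  ConcaveOn ℝ (Set.Ioi (0 : ℝ)) f1 ∧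
  ConcaveOn ℝ (Set.Ioi (0 : ℝ)) f0 ∧
  (∀ r > (0 : ℝ), deriv f0 r = -r * deriv f1 r) ∧
  ConvexOn ℝ (Set.Ioo (0 : ℝ) 1)
    (fun μ => μ * f1 (μ / (1 - μ)) + (1 - μ) * f0 (μ / (1 - μ)))


noncomputable def Hfvn (β : ℝ) : ℝ → ℝ := fun μ =>
  (β + (1 - β) * μ) * (Real.log (β + (1 - β) * μ) - Real.log (1 - μ)) - μ

noncomputable def Hfvn' (β : ℝ) : ℝ → ℝ := fun μ =>
  (1 - β) * (Real.log (β + (1 - β) * μ) - Real.log (1 - μ)) + (1 - β)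
    + (β + (1 - β) * μ) / (1 - μ) - 1

lemma fvn_upos {β μ : ℝ} (hβ : 0 ≤ β) (hμ : μ ∈ Set.Ioo (0:ℝ) 1) :
    0 < β + (1 - β) * μ := by
  obtain ⟨h0, h1⟩ := hμ; nlinarith

lemma fvn_GeqH {β : ℝ} (hβ : 0 ≤ β) {μ : ℝ} (hμ : μ ∈ Set.Ioo (0:ℝ) 1) :
    μ * Real.log (μ / (1 - μ) + β) +
      (1 - μ) * (β * Real.log (μ / (1 - μ) + β) - μ / (1 - μ)) = Hfvn β μ := by
  obtain ⟨h0, h1⟩ := hμ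
  have h1' : 0 < 1 - μ := by linarith
  have hu : 0 < β + (1 - β) * μ := fvn_upos hβ ⟨h0, h1⟩
  have hkey : μ / (1 - μ) + β = (β + (1 - β) * μ) / (1 - μ) := by
    field_simp; ring
  rw [hkey, Real.log_div hu.ne' h1'.ne', Hfvn]
  field_simp
  ring

lemma fvn_hasDerivH {β : ℝ} (hβ : 0 ≤ β) {μ : ℝ} (hμ : μ ∈ Set.Ioo (0:ℝ) 1) :
    HasDerivAt (Hfvn β) (Hfvn' β μ) μ := by
  obtain ⟨h0, h1⟩ := hμ
  have h1' : 0 < 1 - μ := by linarith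
  have hu : 0 < β + (1 - β) * μ := fvn_upos hβ ⟨h0, h1⟩
  have hU : HasDerivAt (fun μ : ℝ => β + (1 - β) * μ) (1 - β) μ := by
    simpa using ((hasDerivAt_id μ).const_mul (1 - β)).const_add β
  have hlogU : HasDerivAt (fun μ : ℝ => Real.log (β + (1 - β) * μ))
      ((1 - β) / (β + (1 - β) * μ)) μ := hU.log hu.ne'
  have h1m : HasDerivAt (fun μ : ℝ => 1 - μ) (-1) μ := by
    simpa using (hasDerivAt_id μ).const_sub 1
  have hlog1 : HasDerivAt (fun μ : ℝ => Real.log (1 - μ)) (-1 / (1 - μ)) μ :=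
    h1m.log h1'.ne'
  have h := (hU.mul (hlogU.sub hlog1)).sub (hasDerivAt_id μ)
  refine h.congr_deriv ?_
  simp only [Hfvn', Pi.sub_apply]
  field_simp
  ring

lemma fvn_hasDerivH' {β : ℝ} (hβ : 0 ≤ β) {μ : ℝ} (hμ : μ ∈ Set.Ioo (0:ℝ) 1) :
    HasDerivAt (Hfvn' β) (1 / ((1 - μ) ^ 2 * (μ + β * (1 - μ)))) μ := by
  obtain ⟨h0, h1⟩ := hμ
  have h1' : 0 < 1 - μ := by linarith
  have hu : 0 < β + (1 - β) * μ := fvn_upos hβ ⟨h0, h1⟩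
  have hU : HasDerivAt (fun μ : ℝ => β + (1 - β) * μ) (1 - β) μ := by
    simpa using ((hasDerivAt_id μ).const_mul (1 - β)).const_add β
  have hlogU : HasDerivAt (fun μ : ℝ => Real.log (β + (1 - β) * μ))
      ((1 - β) / (β + (1 - β) * μ)) μ := hU.log hu.ne'
  have h1m : HasDerivAt (fun μ : ℝ => 1 - μ) (-1) μ := by
    simpa using (hasDerivAt_id μ).const_sub 1
  have hlog1 : HasDerivAt (fun μ : ℝ => Real.log (1 - μ)) (-1 / (1 - μ)) μ :=
    h1m.log h1'.ne'
  have hdiv : HasDerivAt (fun μ : ℝ => (β + (1 - β) * μ) / (1 - μ))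
      (((1 - β) * (1 - μ) - (β + (1 - β) * μ) * (-1)) / (1 - μ) ^ 2) μ :=
    hU.div h1m h1'.ne'
  have h := ((((hlogU.sub hlog1).const_mul (1 - β)).add_const (1 - β)).add hdiv).sub_const 1
  refine h.congr_deriv ?_
  have hne : μ + β * (1 - μ) ≠ 0 := by nlinarith
  field_simp
  ring

lemma fvn_main (β : ℝ) (hβ : 0 ≤ β) {μ : ℝ} (hμ : μ ∈ Set.Ioo (0:ℝ) 1) :
    DifferentiableAt ℝ
        (fun μ : ℝ => μ * Real.log (μ / (1 - μ) + β) +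
          (1 - μ) * (β * Real.log (μ / (1 - μ) + β) - μ / (1 - μ))) μ ∧
      DifferentiableAt ℝ
        (deriv (fun μ : ℝ => μ * Real.log (μ / (1 - μ) + β) +
          (1 - μ) * (β * Real.log (μ / (1 - μ) + β) - μ / (1 - μ)))) μ ∧
      deriv (deriv (fun μ : ℝ => μ * Real.log (μ / (1 - μ) + β) +
          (1 - μ) * (β * Real.log (μ / (1 - μ) + β) - μ / (1 - μ)))) μ =
        1 / ((1 - μ) ^ 2 * (μ + β * (1 - μ))) ∧
      0 < 1 / ((1 - μ) ^ 2 * (μ + β * (1 - μ))) := by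
  set G : ℝ → ℝ := fun μ : ℝ => μ * Real.log (μ / (1 - μ) + β) +
          (1 - μ) * (β * Real.log (μ / (1 - μ) + β) - μ / (1 - μ)) with hGdef
  have hmem : Set.Ioo (0:ℝ) 1 ∈ nhds μ := isOpen_Ioo.mem_nhds hμ
  have hGH : G =ᶠ[nhds μ] Hfvn β :=
    eventually_of_mem hmem (fun x hx => fvn_GeqH hβ hx)
  have hHdiff : DifferentiableAt ℝ (Hfvn β) μ := (fvn_hasDerivH hβ hμ).differentiableAt
  have hGdiff : DifferentiableAt ℝ G μ := hHdiff.congr_of_eventuallyEq hGH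
  have hderiv_eq : deriv G =ᶠ[nhds μ] Hfvn' β := by
    refine (hGH.deriv).trans (eventually_of_mem hmem (fun x hx => ?_))
    exact (fvn_hasDerivH hβ hx).deriv
  have hH'diff : DifferentiableAt ℝ (Hfvn' β) μ := (fvn_hasDerivH' hβ hμ).differentiableAt
  have h2diff : DifferentiableAt ℝ (deriv G) μ := hH'diff.congr_of_eventuallyEq hderiv_eq
  have h2 : deriv (deriv G) μ = 1 / ((1 - μ) ^ 2 * (μ + β * (1 - μ))) := by
    rw [hderiv_eq.deriv_eq]
    exact (fvn_hasDerivH' hβ hμ).deriv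
  have hpos : 0 < 1 / ((1 - μ) ^ 2 * (μ + β * (1 - μ))) := by
    obtain ⟨h0, h1⟩ := hμ
    have : 0 < μ + β * (1 - μ) := by nlinarith
    have h1' : 0 < 1 - μ := by linarith
    positivity
  exact ⟨hGdiff, h2diff, h2, hpos⟩

lemma fvn_strict (β : ℝ) (hβ : 0 ≤ β) :
    StrictConvexOn ℝ (Set.Ioo (0 : ℝ) 1)
      (fun μ : ℝ => μ * Real.log (μ / (1 - μ) + β) +
        (1 - μ) * (β * Real.log (μ / (1 - μ) + β) - μ / (1 - μ))) := by
  refine strictConvexOn_of_deriv2_pos' (convex_Ioo 0 1) ?_ ?_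
  · intro x hx
    exact ((fvn_main β hβ hx).1.continuousAt).continuousWithinAt
  · intro x hx
    have h := fvn_main β hβ hx
    have : deriv^[2] (fun μ : ℝ => μ * Real.log (μ / (1 - μ) + β) +
        (1 - μ) * (β * Real.log (μ / (1 - μ) + β) - μ / (1 - μ))) x
        = deriv (deriv (fun μ : ℝ => μ * Real.log (μ / (1 - μ) + β) +
        (1 - μ) * (β * Real.log (μ / (1 - μ) + β) - μ / (1 - μ)))) x := rfl
    rw [this, h.2.2.1]
    exact h.2.2.2

lemma fvn_elbo (β : ℝ) (hβ : 0 ≤ β) :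
    (∀ r > (0 : ℝ), DifferentiableAt ℝ (fun r => Real.log (r + β)) r) ∧
    (∀ r > (0 : ℝ), DifferentiableAt ℝ (fun r => β * Real.log (r + β) - r) r) ∧
    ConcaveOn ℝ (Set.Ioi (0 : ℝ)) (fun r => Real.log (r + β)) ∧
    ConcaveOn ℝ (Set.Ioi (0 : ℝ)) (fun r => β * Real.log (r + β) - r) ∧
    (∀ r > (0 : ℝ), deriv (fun r => β * Real.log (r + β) - r) r
        = -r * deriv (fun r => Real.log (r + β)) r) := by
  have hd1 : ∀ r > (0:ℝ), HasDerivAt (fun r => Real.log (r + β)) (1 / (r + β)) r := by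
    intro r hr
    have : (0:ℝ) < r + β := by linarith
    simpa using ((hasDerivAt_id r).add_const β).log this.ne'
  have hd0 : ∀ r > (0:ℝ), HasDerivAt (fun r => β * Real.log (r + β) - r)
      (β * (1 / (r + β)) - 1) r := by
    intro r hr
    exact ((hd1 r hr).const_mul β).sub (hasDerivAt_id' r)
  have hconc1 : ConcaveOn ℝ (Set.Ioi (0 : ℝ)) (fun r => Real.log (r + β)) := by
    refine ⟨convex_Ioi 0, fun x hx y hy a b ha hb hab => ?_⟩
    have hx' : (0:ℝ) < x + β := by have := mem_Ioi.mp hx; linarith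
    have hy' : (0:ℝ) < y + β := by have := mem_Ioi.mp hy; linarith
    have := strictConcaveOn_log_Ioi.concaveOn.2 (mem_Ioi.mpr hx') (mem_Ioi.mpr hy') ha hb hab
    simp only [smul_eq_mul] at this ⊢
    have heq : a * (x + β) + b * (y + β) = a * x + b * y + β := by nlinarith [hab]
    rw [heq] at this
    exact this
  constructor
  · exact fun r hr => (hd1 r hr).differentiableAt
  constructor
  · exact fun r hr => (hd0 r hr).differentiableAt
  constructor
  · exact hconc1
  constructor
  · have hsm : ConcaveOn ℝ (Set.Ioi (0 : ℝ)) (fun r => β * Real.log (r + β)) := by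
      have := hconc1.smul hβ
      simpa [smul_eq_mul] using this
    have hlin : ConcaveOn ℝ (Set.Ioi (0 : ℝ)) (fun r : ℝ => -r) :=
      ⟨convex_Ioi 0, fun x _ y _ a b _ _ _ => by simp [smul_eq_mul]⟩
    have := hsm.add hlin
    simpa [sub_eq_add_neg, Pi.add_def] using this
  · intro r hr
    rw [(hd0 r hr).deriv, (hd1 r hr).deriv]
    have : (0:ℝ) < r + β := by linarith
    field_simp
    ring

/-- For `β ≥ 0`, `f₁(r) = log(r+β)`, `f₀(r) = β·log(r+β) - r`, the induced
`G(μ) = μ·f₁(μ/(1-μ)) + (1-μ)·f₀(μ/(1-μ))` is twice differentiable on `(0,1)` with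
`G''(μ) = 1/((1-μ)²·(μ + β(1-μ))) > 0`; hence `G` is strictly convex on `(0,1)` and the pair
has the double ELBO property. -/
theorem fvnce_stmt7 (β : ℝ) (hβ : 0 ≤ β) :
    (∀ μ ∈ Set.Ioo (0 : ℝ) 1,
      DifferentiableAt ℝ
        (fun μ : ℝ => μ * Real.log (μ / (1 - μ) + β) +
          (1 - μ) * (β * Real.log (μ / (1 - μ) + β) - μ / (1 - μ))) μ ∧
      DifferentiableAt ℝ
        (deriv (fun μ : ℝ => μ * Real.log (μ / (1 - μ) + β) +
          (1 - μ) * (β * Real.log (μ / (1 - μ) + β) - μ / (1 - μ)))) μ ∧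
      deriv (deriv (fun μ : ℝ => μ * Real.log (μ / (1 - μ) + β) +
          (1 - μ) * (β * Real.log (μ / (1 - μ) + β) - μ / (1 - μ)))) μ =
        1 / ((1 - μ) ^ 2 * (μ + β * (1 - μ))) ∧
      0 < 1 / ((1 - μ) ^ 2 * (μ + β * (1 - μ)))) ∧
    StrictConvexOn ℝ (Set.Ioo (0 : ℝ) 1)
      (fun μ : ℝ => μ * Real.log (μ / (1 - μ) + β) +
        (1 - μ) * (β * Real.log (μ / (1 - μ) + β) - μ / (1 - μ))) ∧
    DoubleELBO (fun r => Real.log (r + β)) (fun r => β * Real.log (r + β) - r) := by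
  refine ⟨fun μ hμ => fvn_main β hβ hμ, fvn_strict β hβ, ?_⟩
  obtain ⟨h1, h2, h3, h4, h5⟩ := fvn_elbo β hβ
  exact ⟨h1, h2, h3, h4, h5, (fvn_strict β hβ).convexOn⟩
end

section
/- Let X and Z be finite nonempty types, let p_θ be a probability mass function on X × Z with p_θ(x,z) > 0 for all (x,z), let p_d and p_n be probability mass functions on X with p_n(x) > 0 for all x, and let f₁, f₀ : (0,∞) → ℝ be concave. Define the model marginal p_θ(x) = ∑_z p_θ(x,z) and the model posterior q*(z|x) = p_θ(x,z)/p_θ(x). Then the fully variational NCE objective evaluated at the model posterior equals the NCE objective: ∑_x p_d(x) ∑_z q*(z|x) · f₁( p_θ(x,z) / (p_n(x)·q*(z|x)) ) + ∑_x p_n(x) ∑_z q*(z|x) · f₀( p_θ(x,z) / (p_n(x)·q*(z|x)) ) = ∑_x p_d(x) · f₁( p_θ(x)/p_n(x) ) + ∑_x p_n(x) · f₀( p_θ(x)/p_n(x) ). That is, the variational lower bound is tight when both encoders equal the model posterior. -/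
/-- The fully variational NCE objective evaluated with both encoders equal to
the model posterior `q*(z|x) = pθ(x,z)/pθ(x)` (where `pθ(x) = ∑_z pθ(x,z)`) equals the
S-NCE objective: the variational lower bound is tight at the model posterior. -/
theorem fvnce_stmt13 (X Z : Type*) [Fintype X] [Fintype Z] [Nonempty X] [Nonempty Z]
    (pθ : X × Z → ℝ) (hpθ : ∀ p, 0 < pθ p) (hpθsum : ∑ p, pθ p = 1)
    (pd : X → ℝ) (hpd : ∀ x, 0 ≤ pd x) (hpdsum : ∑ x, pd x = 1)
    (pn : X → ℝ) (hpn : ∀ x, 0 < pn x) (hpnsum : ∑ x, pn x = 1)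
    (f1 f0 : ℝ → ℝ)
    (hf1 : ConcaveOn ℝ (Set.Ioi (0 : ℝ)) f1) (hf0 : ConcaveOn ℝ (Set.Ioi (0 : ℝ)) f0) :
    (∑ x, pd x * ∑ z, (pθ (x, z) / ∑ z', pθ (x, z')) *
        f1 (pθ (x, z) / (pn x * (pθ (x, z) / ∑ z', pθ (x, z'))))) +
    (∑ x, pn x * ∑ z, (pθ (x, z) / ∑ z', pθ (x, z')) *
        f0 (pθ (x, z) / (pn x * (pθ (x, z) / ∑ z', pθ (x, z'))))) =
    (∑ x, pd x * f1 ((∑ z', pθ (x, z')) / pn x)) +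
    (∑ x, pn x * f0 ((∑ z', pθ (x, z')) / pn x)) := by
  have key : ∀ (f : ℝ → ℝ) (x : X),
      ∑ z, (pθ (x, z) / ∑ z', pθ (x, z')) *
        f (pθ (x, z) / (pn x * (pθ (x, z) / ∑ z', pθ (x, z')))) =
      f ((∑ z', pθ (x, z')) / pn x) := by
    intro f x
    have hS : 0 < ∑ z', pθ (x, z') := Finset.sum_pos (fun z _ => hpθ _) Finset.univ_nonempty
    have harg : ∀ z : Z, pθ (x, z) / (pn x * (pθ (x, z) / ∑ z', pθ (x, z'))) =
        (∑ z', pθ (x, z')) / pn x := by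
      intro z
      field_simp
      nth_rewrite 1 [← mul_one (pθ (x, z))]
      exact mul_div_mul_left _ _ (hpθ (x, z)).ne'
    calc ∑ z, (pθ (x, z) / ∑ z', pθ (x, z')) *
          f (pθ (x, z) / (pn x * (pθ (x, z) / ∑ z', pθ (x, z'))))
        = ∑ z, (pθ (x, z) / ∑ z', pθ (x, z')) * f ((∑ z', pθ (x, z')) / pn x) := by
          refine Finset.sum_congr rfl fun z _ => ?_
          rw [harg z]
      _ = (∑ z, pθ (x, z) / ∑ z', pθ (x, z')) * f ((∑ z', pθ (x, z')) / pn x) := by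
          rw [Finset.sum_mul]
      _ = f ((∑ z', pθ (x, z')) / pn x) := by
          rw [← Finset.sum_div, div_self hS.ne']
          ring
  simp only [key f1, key f0]
end

section
/- Let X and Z be finite nonempty types. Let p_d and p_n be probability mass functions on X with p_n(x) > 0 for all x, let p_Z be a probability mass function on Z with p_Z(z) > 0 for all z, let p_θ(·|z) be a probability mass function on X for each z with p_θ(x|z) > 0 for all x, z, and set the joint p_θ(x,z) = p_θ(x|z)·p_Z(z). For each x let q₁(·|x) and q₀(·|x) be probability mass functions on Z with q₁(z|x) > 0 and q₀(z|x) > 0 for all z. Then J⁰⁰(θ,q₁,q₀) := ∑_x p_d(x) ∑_z q₁(z|x)·log( p_θ(x,z) / (p_n(x)·q₁(z|x)) ) − ∑_x p_n(x) ∑_z q₀(z|x)·( p_θ(x,z) / (p_n(x)·q₀(z|x)) ) equals ∑_x p_d(x)·[ ∑_z q₁(z|x)·log p_θ(x|z) − KL(q₁(·|x) ‖ p_Z) ] − ∑_x p_d(x)·log p_n(x) − 1, where KL(q ‖ p) = ∑_z q(z)·log(q(z)/p(z)). In particular, J⁰⁰ equals the variational autoencoder objective up to additive terms independent of θ and q₁.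 -/
/-- The fully variational NCE objective `J⁰⁰` (with `f₁(r) = log r`,
`f₀(r) = -r`) for the latent-variable model `pθ(x,z) = pθ(x|z)·pZ(z)` equals the VAE
objective plus terms independent of `θ` and `q₁`:
`J⁰⁰ = ∑_x pd(x)·[∑_z q₁(z|x)·log pθ(x|z) − KL(q₁(·|x) ‖ pZ)] − ∑_x pd(x)·log pn(x) − 1`.
Here `pθc z x` denotes `pθ(x|z)`, and `KL(q‖p) = ∑_z q(z)·log(q(z)/p(z))`. -/
theorem fvnce_stmt15 (X Z : Type*) [Fintype X] [Fintype Z] [Nonempty X] [Nonempty Z]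
    (pd : X → ℝ) (hpd0 : ∀ x, 0 ≤ pd x) (hpd : ∑ x, pd x = 1)
    (pn : X → ℝ) (hpn0 : ∀ x, 0 < pn x) (hpn : ∑ x, pn x = 1)
    (pZ : Z → ℝ) (hpZ0 : ∀ z, 0 < pZ z) (hpZ : ∑ z, pZ z = 1)
    (pθc : Z → X → ℝ) (hpθc0 : ∀ z x, 0 < pθc z x) (hpθc : ∀ z, ∑ x, pθc z x = 1)
    (q1 : X → Z → ℝ) (hq10 : ∀ x z, 0 < q1 x z) (hq1 : ∀ x, ∑ z, q1 x z = 1)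
    (q0 : X → Z → ℝ) (hq00 : ∀ x z, 0 < q0 x z) (hq0 : ∀ x, ∑ z, q0 x z = 1) :
    (∑ x, pd x * ∑ z, q1 x z * Real.log (pθc z x * pZ z / (pn x * q1 x z))) -
      (∑ x, pn x * ∑ z, q0 x z * (pθc z x * pZ z / (pn x * q0 x z))) =
    (∑ x, pd x * ((∑ z, q1 x z * Real.log (pθc z x)) -
        ∑ z, q1 x z * Real.log (q1 x z / pZ z))) -
      (∑ x, pd x * Real.log (pn x)) - 1 := by
  have h2 : (∑ x, pn x * ∑ z, q0 x z * (pθc z x * pZ z / (pn x * q0 x z))) = 1 := by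
    have : ∀ x, pn x * ∑ z, q0 x z * (pθc z x * pZ z / (pn x * q0 x z))
        = ∑ z, pθc z x * pZ z := by
      intro x
      rw [Finset.mul_sum]
      refine Finset.sum_congr rfl fun z _ => ?_
      have ha : pn x ≠ 0 := (hpn0 x).ne'
      have hb : q0 x z ≠ 0 := (hq00 x z).ne'
      field_simp
    simp only [this]
    rw [Finset.sum_comm]
    simp only [← Finset.sum_mul, hpθc]
    simpa using hpZ
  have h1 : ∀ x, pd x * ∑ z, q1 x z * Real.log (pθc z x * pZ z / (pn x * q1 x z))
      = pd x * ((∑ z, q1 x z * Real.log (pθc z x)) -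
        ∑ z, q1 x z * Real.log (q1 x z / pZ z)) - pd x * Real.log (pn x) := by
    intro x
    have hlog : ∀ z, Real.log (pθc z x * pZ z / (pn x * q1 x z))
        = Real.log (pθc z x) - Real.log (q1 x z / pZ z) - Real.log (pn x) := by
      intro z
      rw [Real.log_div (mul_pos (hpθc0 z x) (hpZ0 z)).ne' (mul_pos (hpn0 x) (hq10 x z)).ne',
        Real.log_mul (hpθc0 z x).ne' (hpZ0 z).ne',
        Real.log_mul (hpn0 x).ne' (hq10 x z).ne',
        Real.log_div (hq10 x z).ne' (hpZ0 z).ne']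
      ring
    have : ∑ z, q1 x z * Real.log (pθc z x * pZ z / (pn x * q1 x z))
        = (∑ z, q1 x z * Real.log (pθc z x)) -
          (∑ z, q1 x z * Real.log (q1 x z / pZ z)) - Real.log (pn x) := by
      simp only [hlog, mul_sub]
      rw [Finset.sum_sub_distrib, Finset.sum_sub_distrib, ← Finset.sum_mul, hq1, one_mul]
    rw [this]; ring
  rw [h2]
  simp only [h1]
  rw [Finset.sum_sub_distrib]
end

section
/- Let X and Z be finite nonempty types, let p_d and p_n be probability mass functions on X with p_n(x) > 0 for all x, let p_θ be a function on X × Z, and for each x let q(·|x) be a probability mass function on Z with q(z|x) > 0 for all z. Define J¹⁰(θ,q) = ∑_{x,z} p_d(x)·p_θ(x,z)/p_n(x) − (1/2)·∑_{x,z} p_n(x)·q(z|x) · ( p_θ(x,z) / (p_n(x)·q(z|x)) )². Then J¹⁰(θ,q) = −(1/2)·∑_{x,z} ( p_θ(x,z) − p_d(x)·q(z|x) )² / ( p_n(x)·q(z|x) ) + (1/2)·∑_{x,z} p_d(x)²·q(z|x) / p_n(x). In particular, maximizing J¹⁰ over θ is equivalent to minimizing the weighted squared distance between p_θ(x,z)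 and p_d(x)·q(z|x) with weights 1/(p_n(x)·q(z|x)). -/
/-- The fully variational NCE objective with `f₁(r) = r`, `f₀(r) = -r²/2`
(the case `(α,β) = (1,0)`) and tied encoders `q` equals, up to a constant independent of
`pθ`, the negative weighted squared distance between `pθ(x,z)` and `pd(x)·q(z|x)` with
weights `1/(pn(x)·q(z|x))`. -/
theorem fvnce_stmt18 (X Z : Type*) [Fintype X] [Fintype Z] [Nonempty X] [Nonempty Z]
    (pd : X → ℝ) (hpd0 : ∀ x, 0 ≤ pd x) (hpd : ∑ x, pd x = 1)
    (pn : X → ℝ) (hpn0 : ∀ x, 0 < pn x) (hpn : ∑ x, pn x = 1)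
    (pθ : X × Z → ℝ)
    (q : X → Z → ℝ) (hq0 : ∀ x z, 0 < q x z) (hq : ∀ x, ∑ z, q x z = 1) :
    (∑ x, ∑ z, pd x * pθ (x, z) / pn x) -
      (1 / 2) * ∑ x, ∑ z, pn x * q x z * (pθ (x, z) / (pn x * q x z)) ^ 2 =
    -(1 / 2) * (∑ x, ∑ z, (pθ (x, z) - pd x * q x z) ^ 2 / (pn x * q x z)) +
      (1 / 2) * ∑ x, ∑ z, pd x ^ 2 * q x z / pn x := by
  simp only [Finset.mul_sum, ← Finset.sum_sub_distrib, ← Finset.sum_add_distrib]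
  refine Finset.sum_congr rfl fun x _ => Finset.sum_congr rfl fun z _ => ?_
  have hn := (hpn0 x).ne'
  have hqz := (hq0 x z).ne'
  field_simp
  ring
end
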